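/- Let n, h, k be integers with k > h ≥ 0 and n ≡ h (mod 2). Then (n+1) times the total number of k-down steps, summed over all generalized Dyck paths from (0,0) to (n,h), equals Σ_{j=k−1−h}^{k−1} (2j+h+3)·C(n+1, (n−2j−h−2)/2), where a summand is 0 whenever (n−2j−h−2)/2 is negative. -/
import Mathlib


open Finset

attribute [local instance] Classical.propDecidable

/-- The height of the lattice path `p` (where `true` is a northeast step `(1,1)` and
`false` is a southeast step `(1,-1)`) after its first `i` steps. -/
def pathHeight {n : ℕ} (p : Fin n → Bool) (i : ℕ) : ℤ :=
  ∑ j ∈ Finset.univ.filter (fun j : Fin n => (j : ℕ) < i), (if p j then (1 : ℤ) else -1)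

/-- `p` is a generalized Dyck path from `(0,0)` to `(n,h)`: it ends at height `h`
and never goes below the x-axis. -/
def IsGDPath {n : ℕ} (h : ℤ) (p : Fin n → Bool) : Prop :=
  pathHeight p n = h ∧ ∀ i ≤ n, 0 ≤ pathHeight p i

/-- The set of generalized Dyck paths from `(0,0)` to `(n,h)`. -/
noncomputable def gdPaths (n : ℕ) (h : ℤ) : Finset (Fin n → Bool) :=
  Finset.univ.filter (IsGDPath h)

/-- The number of `k`-down steps of `p`, i.e. southeast steps from height `k` to `k-1`. -/
noncomputable def downSteps {n : ℕ} (k : ℤ) (p : Fin n → Bool) : ℕ :=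
  (Finset.univ.filter (fun i : Fin n => p i = false ∧ pathHeight p (i : ℕ) = k)).card

/-- Binomial coefficient on integers, `0` unless `0 ≤ b ≤ a`. -/
def binom (a b : ℤ) : ℤ :=
  if 0 ≤ b ∧ b ≤ a then (a.toNat.choose b.toNat : ℤ) else 0

/-! ### Binomial lemmas -/

lemma binom_eq {n : ℤ} (b : ℤ) (hn : 0 ≤ n) :
    binom n b = if 0 ≤ b then ((n.toNat.choose b.toNat : ℕ) : ℤ) else 0 := by
  unfold binom
  split_ifs with h1 h2 h2
  · rfl
  · exact absurd h1.1 h2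
  · rw [Nat.choose_eq_zero_of_lt (by omega)]
    simp
  · rfl

lemma binom_neg {n b : ℤ} (hb : b < 0) : binom n b = 0 := by
  unfold binom
  rw [if_neg (by omega)]

lemma binom_pascal (n b : ℤ) (hn : 0 ≤ n) :
    binom (n + 1) b = binom n b + binom n (b - 1) := by
  rw [binom_eq _ (by omega), binom_eq _ hn, binom_eq _ hn]
  rcases lt_trichotomy b 0 with hb | hb | hb
  · rw [if_neg (by omega), if_neg (by omega), if_neg (by omega)]; ring
  · subst hb
    rw [if_pos le_rfl, if_pos le_rfl, if_neg (by omega)]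
    simp
  · rw [if_pos (by omega), if_pos (by omega), if_pos (by omega)]
    have h1 : (n + 1).toNat = n.toNat + 1 := by omega
    have h2 : b.toNat = (b - 1).toNat + 1 := by omega
    rw [h1, h2, Nat.choose_succ_succ']
    push_cast; ring

/-- Ballot-number expression: number of nonnegative paths of `n` steps ending at height `a`. -/
def Bi (n a : ℤ) : ℤ := binom n ((n - a) / 2) - binom n ((n - a) / 2 - 1)

lemma Bi_rec (n a : ℤ) (hn : 0 ≤ n) : Bi (n + 1) a = Bi n (a - 1) + Bi n (a + 1) := by
  unfold Bi
  have e1 : (n - (a - 1)) / 2 = (n + 1 - a) / 2 := by omega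
  have e2 : (n - (a + 1)) / 2 = (n + 1 - a) / 2 - 1 := by omega
  rw [e1, e2, binom_pascal n ((n + 1 - a) / 2) hn,
    binom_pascal n ((n + 1 - a) / 2 - 1) hn]
  ring

lemma Bi_neg_one (n : ℤ) (hn : 0 ≤ n) (hodd : n % 2 = 1) : Bi n (-1) = 0 := by
  unfold Bi
  rw [binom_eq _ hn, binom_eq _ hn, if_pos (by omega), if_pos (by omega)]
  have hM : ((n - -1) / 2).toNat ≤ n.toNat := by omega
  have := Nat.choose_symm hM
  have e : n.toNat - ((n - -1) / 2).toNat = ((n - -1) / 2 - 1).toNat := by omega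
  rw [e] at this
  rw [← this]
  ring

lemma Bi_zero_of_pos (a : ℤ) (ha : 1 ≤ a) : Bi 0 a = 0 := by
  unfold Bi binom
  rw [if_neg (by omega), if_neg (by omega)]
  ring

/-! ### Path lemmas -/

lemma pathHeight_eq_sum {n : ℕ} (p : Fin n → Bool) (i : ℕ) :
    pathHeight p i = ∑ j : Fin n, if (j : ℕ) < i then (if p j then (1 : ℤ) else -1) else 0 := by
  rw [pathHeight, Finset.sum_filter]

lemma pathHeight_stable {n : ℕ} (p : Fin n → Bool) {i : ℕ} (hi : n ≤ i) :
    pathHeight p i = pathHeight p n := by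
  rw [pathHeight_eq_sum, pathHeight_eq_sum]
  refine Finset.sum_congr rfl fun j _ => ?_
  rw [if_pos (lt_of_lt_of_le j.isLt hi), if_pos j.isLt]

lemma pathHeight_snoc {n : ℕ} (p : Fin n → Bool) (b : Bool) (i : ℕ) :
    pathHeight (Fin.snoc p b) i
      = pathHeight p i + if n < i then (if b then (1 : ℤ) else -1) else 0 := by
  rw [pathHeight_eq_sum, pathHeight_eq_sum, Fin.sum_univ_castSucc]
  simp only [Fin.snoc_castSucc, Fin.snoc_last, Fin.coe_castSucc, Fin.val_last]

lemma downSteps_eq_sum {n : ℕ} (k : ℤ) (p : Fin n → Bool) :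
    downSteps k p = ∑ i : Fin n, if p i = false ∧ pathHeight p (i : ℕ) = k then 1 else 0 := by
  rw [downSteps, Finset.card_filter]

lemma downSteps_snoc {n : ℕ} (k : ℤ) (p : Fin n → Bool) (b : Bool) :
    downSteps k (Fin.snoc p b)
      = downSteps k p + if b = false ∧ pathHeight p n = k then 1 else 0 := by
  have hph : ∀ j : ℕ, j ≤ n → pathHeight (Fin.snoc p b) j = pathHeight p j := by
    intro j hj
    rw [pathHeight_snoc, if_neg (by omega), add_zero]
  rw [downSteps_eq_sum, downSteps_eq_sum, Fin.sum_univ_castSucc]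
  simp only [Fin.snoc_castSucc, Fin.snoc_last, Fin.coe_castSucc, Fin.val_last]
  congr 1
  · refine Finset.sum_congr rfl fun j _ => ?_
    rw [hph j (le_of_lt j.isLt)]
  · rw [hph n le_rfl]

lemma isGDPath_snoc {n : ℕ} (h : ℤ) (p : Fin n → Bool) (b : Bool) :
    IsGDPath h (Fin.snoc p b) ↔ IsGDPath (h - (if b then 1 else -1)) p ∧ 0 ≤ h := by
  have key : ∀ i ≤ n, pathHeight (Fin.snoc p b) i = pathHeight p i := by
    intro i hi
    rw [pathHeight_snoc, if_neg (by omega), add_zero]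
  have keyend : pathHeight (Fin.snoc p b) (n + 1)
      = pathHeight p n + (if b then 1 else -1) := by
    rw [pathHeight_snoc, if_pos (by omega), pathHeight_stable p (Nat.le_succ n)]
  constructor
  · rintro ⟨hend, hnn⟩
    rw [keyend] at hend
    have h0 : 0 ≤ h := by
      have := hnn (n + 1) le_rfl
      rw [keyend] at this
      linarith [hend]
    refine ⟨⟨by linarith, fun i hi => ?_⟩, h0⟩
    · rw [← key i hi]; exact hnn i (by omega)
  · rintro ⟨⟨pend, pnn⟩, hh⟩
    constructor
    · rw [keyend, pend]; ring
    · intro i hi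
      rcases Nat.lt_or_ge i (n + 1) with hlt | hge
      · rw [key i (by omega)]; exact pnn i (by omega)
      · have : i = n + 1 := by omega
        subst this
        rw [keyend, pend]
        linarith

lemma gdPaths_neg {n : ℕ} {h : ℤ} (hh : h < 0) : gdPaths n h = ∅ := by
  rw [Finset.eq_empty_iff_forall_notMem]
  intro p hp
  rw [gdPaths, Finset.mem_filter] at hp
  obtain ⟨-, hend, hnn⟩ := hp
  have := hnn n le_rfl
  omega

/-- `Fin.snoc` as an equivalence. -/
def snocEquivBool (n : ℕ) : (Fin n → Bool) × Bool ≃ (Fin (n + 1) → Bool) where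
  toFun x := Fin.snoc x.1 x.2
  invFun q := (Fin.init q, q (Fin.last n))
  left_inv x := by
    ext
    · simp
    · simp
  right_inv q := by simp

lemma sum_gdPaths_succ {n : ℕ} {h : ℤ} (hh : 0 ≤ h) (F : (Fin (n + 1) → Bool) → ℕ) :
    ∑ q ∈ gdPaths (n + 1) h, F q
      = (∑ p ∈ gdPaths n (h - 1), F (Fin.snoc p true))
        + ∑ p ∈ gdPaths n (h + 1), F (Fin.snoc p false) := by
  calc ∑ q ∈ gdPaths (n + 1) h, F q
      = ∑ q : Fin (n + 1) → Bool, if IsGDPath h q then F q else 0 := by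
        rw [gdPaths, Finset.sum_filter]
    _ = ∑ x : (Fin n → Bool) × Bool,
          (if IsGDPath h (Fin.snoc x.1 x.2) then F (Fin.snoc x.1 x.2) else 0) := by
        rw [← Equiv.sum_comp (snocEquivBool n)
          (fun q => if IsGDPath h q then F q else 0)]
        rfl
    _ = ∑ p : Fin n → Bool,
          ((if IsGDPath h (Fin.snoc p true) then F (Fin.snoc p true) else 0)
          + (if IsGDPath h (Fin.snoc p false) then F (Fin.snoc p false) else 0)) := by
        rw [Fintype.sum_prod_type]
        refine Finset.sum_congr rfl fun p _ => ?_
        rw [Fintype.sum_bool]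
    _ = (∑ p : Fin n → Bool, if IsGDPath (h - 1) p then F (Fin.snoc p true) else 0)
        + ∑ p : Fin n → Bool, if IsGDPath (h + 1) p then F (Fin.snoc p false) else 0 := by
        rw [← Finset.sum_add_distrib]
        refine Finset.sum_congr rfl fun p _ => ?_
        rw [isGDPath_snoc, isGDPath_snoc]
        simp [hh, sub_neg_eq_add]
    _ = _ := by
        rw [gdPaths, gdPaths, Finset.sum_filter, Finset.sum_filter]

/-- Number of generalized Dyck paths. -/
noncomputable def Nn (n : ℕ) (h : ℤ) : ℕ := (gdPaths n h).card

/-- Total number of `k`-down steps over generalized Dyck paths. -/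
noncomputable def Dn (n : ℕ) (h k : ℤ) : ℕ := ∑ p ∈ gdPaths n h, downSteps k p

lemma Nn_neg {n : ℕ} {h : ℤ} (hh : h < 0) : Nn n h = 0 := by
  rw [Nn, gdPaths_neg hh, Finset.card_empty]

lemma Dn_neg {n : ℕ} {h k : ℤ} (hh : h < 0) : Dn n h k = 0 := by
  rw [Dn, gdPaths_neg hh, Finset.sum_empty]

lemma Nn_succ {n : ℕ} {h : ℤ} (hh : 0 ≤ h) :
    Nn (n + 1) h = Nn n (h - 1) + Nn n (h + 1) := by
  rw [Nn, Nn, Nn, Finset.card_eq_sum_ones, Finset.card_eq_sum_ones,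
    Finset.card_eq_sum_ones]
  exact sum_gdPaths_succ (n := n) hh (fun _ => 1)

lemma Dn_succ {n : ℕ} {h : ℤ} (k : ℤ) (hh : 0 ≤ h) :
    Dn (n + 1) h k
      = Dn n (h - 1) k + Dn n (h + 1) k + (if h + 1 = k then Nn n (h + 1) else 0) := by
  rw [Dn, sum_gdPaths_succ hh (downSteps k)]
  have h1 : ∑ p ∈ gdPaths n (h - 1), downSteps k (Fin.snoc p true) = Dn n (h - 1) k := by
    rw [Dn]
    refine Finset.sum_congr rfl fun p _ => ?_
    rw [downSteps_snoc]
    simp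
  have h2 : ∑ p ∈ gdPaths n (h + 1), downSteps k (Fin.snoc p false)
      = Dn n (h + 1) k + (if h + 1 = k then Nn n (h + 1) else 0) := by
    have e : ∀ p ∈ gdPaths n (h + 1),
        downSteps k (Fin.snoc p false)
          = downSteps k p + (if h + 1 = k then 1 else 0) := by
      intro p hp
      rw [gdPaths, Finset.mem_filter] at hp
      rw [downSteps_snoc, hp.2.1]
      simp
    rw [Finset.sum_congr rfl e, Finset.sum_add_distrib, Dn, Finset.sum_const]
    by_cases hk : h + 1 = k
    · rw [if_pos hk, if_pos hk, Nn]
      simp [mul_comm]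
    · rw [if_neg hk, if_neg hk]
      simp
  rw [h1, h2, add_assoc]

lemma pathHeight_zero_path (p : Fin 0 → Bool) (i : ℕ) : pathHeight p i = 0 := by
  simp [pathHeight]

lemma Nn_zero (h : ℤ) : Nn 0 h = if h = 0 then 1 else 0 := by
  rw [Nn, gdPaths]
  by_cases h0 : h = 0
  · subst h0
    rw [if_pos rfl, Finset.filter_true_of_mem]
    · simp
    · intro p _
      exact ⟨pathHeight_zero_path p 0, fun i _ => le_of_eq (pathHeight_zero_path p i).symm⟩
  · rw [if_neg h0, Finset.filter_false_of_mem, Finset.card_empty]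
    intro p _ hp
    exact h0 (hp.1 ▸ (pathHeight_zero_path p 0).symm)

lemma Dn_zero (h k : ℤ) : Dn 0 h k = 0 := by
  rw [Dn]
  refine Finset.sum_eq_zero fun p _ => ?_
  simp [downSteps]

/-! ### The ballot lemma -/

lemma Nn_eq_Bi : ∀ (n : ℕ) (a : ℤ), 0 ≤ a → ((n : ℤ) - a) % 2 = 0 → (Nn n a : ℤ) = Bi n a := by
  intro n
  induction n with
  | zero =>
    intro a ha hpar
    rw [Nat.cast_zero]
    rcases eq_or_lt_of_le ha with h0 | h0
    · rw [← h0, Nn_zero, if_pos rfl]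
      norm_num [Bi, binom]
    · rw [Nn_zero, if_neg (by omega), Bi_zero_of_pos a (by omega)]
      simp
  | succ n ih =>
    intro a ha hpar
    have hpar' : ((n : ℤ) + 1 - a) % 2 = 0 := by push_cast at hpar; omega
    have hcast : ((n + 1 : ℕ) : ℤ) = (n : ℤ) + 1 := by push_cast; ring
    rw [hcast]
    have hBrec : Bi ((n : ℤ) + 1) a = Bi n (a - 1) + Bi n (a + 1) :=
      Bi_rec n a (by positivity)
    rw [hBrec, Nn_succ ha]
    rcases eq_or_lt_of_le ha with h0 | h0
    · obtain rfl : a = 0 := h0.symm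
      have hodd : (n : ℤ) % 2 = 1 := by omega
      rw [show (0 : ℤ) - 1 = -1 by ring, show (0 : ℤ) + 1 = 1 by ring,
        Nn_neg (by norm_num), Bi_neg_one n (by positivity) hodd]
      push_cast
      rw [ih 1 (by norm_num) (by omega)]
    · push_cast
      rw [ih (a - 1) (by omega) (by omega), ih (a + 1) (by omega) (by omega)]

/-! ### The binomial sum side -/

/-- The closed form: sum of ballot numbers. -/
def Sn (n : ℤ) (h k : ℕ) : ℤ :=
  ∑ j ∈ Finset.Icc (k - 1 - h) (k - 1), Bi n (2 * (j : ℤ) + h + 2)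

lemma sum_Icc_bot {a b : ℕ} (hab : a ≤ b) (f : ℕ → ℤ) :
    ∑ j ∈ Finset.Icc a b, f j = f a + ∑ j ∈ Finset.Icc (a + 1) b, f j := by
  have e : Finset.Icc a b = insert a (Finset.Icc (a + 1) b) := by
    ext x
    simp only [Finset.mem_Icc, Finset.mem_insert]
    omega
  rw [e, Finset.sum_insert (by simp only [Finset.mem_Icc]; omega)]

lemma Sn_succ0 {n : ℤ} (hn : 0 ≤ n) {k : ℕ} (hk : 1 ≤ k) :
    Sn (n + 1) 0 k = Sn n 1 k + (if k = 1 then Bi n 1 else 0) := by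
  unfold Sn
  rw [show k - 1 - 0 = k - 1 from rfl, Finset.Icc_self, Finset.sum_singleton]
  have e1 : 2 * ((k - 1 : ℕ) : ℤ) + (0 : ℕ) + 2 = 2 * k := by push_cast; omega
  rw [e1, Bi_rec n (2 * k) hn]
  by_cases hk1 : k = 1
  · subst hk1
    rw [if_pos rfl]
    norm_num
    ring
  · rw [if_neg hk1]
    have hk2 : 2 ≤ k := by omega
    rw [show k - 1 - 1 = k - 2 by omega]
    rw [sum_Icc_bot (by omega) _]
    have e2 : 2 * ((k - 2 : ℕ) : ℤ) + (1 : ℕ) + 2 = 2 * k - 1 := by push_cast; omega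
    rw [e2, show k - 2 + 1 = k - 1 by omega, Finset.Icc_self, Finset.sum_singleton]
    have e3 : 2 * ((k - 1 : ℕ) : ℤ) + (1 : ℕ) + 2 = 2 * k + 1 := by push_cast; omega
    rw [e3]
    ring

lemma Sn_succ {n : ℤ} (hn : 0 ≤ n) {h k : ℕ} (hh : 1 ≤ h) (hk : 1 ≤ k) :
    Sn (n + 1) h k
      = Sn n (h - 1) k + Sn n (h + 1) k + (if k = h + 1 then Bi n k else 0) := by
  have expand : ∀ j ∈ Finset.Icc (k - 1 - h) (k - 1),
      Bi (n + 1) (2 * (j : ℤ) + h + 2)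
        = Bi n (2 * (j : ℤ) + h + 1) + Bi n (2 * (j : ℤ) + h + 3) := by
    intro j _
    have := Bi_rec n (2 * (j : ℤ) + h + 2) hn
    rw [this]
    congr 1 <;> congr 1 <;> ring
  have hSm : Sn n (h - 1) k = ∑ j ∈ Finset.Icc (k - h) (k - 1), Bi n (2 * (j : ℤ) + h + 1) := by
    unfold Sn
    rw [show k - 1 - (h - 1) = k - h by omega]
    refine Finset.sum_congr rfl fun j _ => ?_
    congr 1 <;> omega
  have hSp : Sn n (h + 1) k
      = ∑ j ∈ Finset.Icc (k - 2 - h) (k - 1), Bi n (2 * (j : ℤ) + h + 3) := by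
    unfold Sn
    rw [show k - 1 - (h + 1) = k - 2 - h by omega]
    refine Finset.sum_congr rfl fun j _ => ?_
    congr 1 <;> omega
  have hA : ∑ j ∈ Finset.Icc (k - 1 - h) (k - 1), Bi n (2 * (j : ℤ) + h + 1)
      = Sn n (h - 1) k + (if h + 1 ≤ k then Bi n (2 * (k : ℤ) - h - 1) else 0) := by
    rw [hSm]
    by_cases hc : h + 1 ≤ k
    · rw [if_pos hc, sum_Icc_bot (show k - 1 - h ≤ k - 1 by omega)]
      rw [show k - 1 - h + 1 = k - h by omega]
      have e : 2 * ((k - 1 - h : ℕ) : ℤ) + h + 1 = 2 * (k : ℤ) - h - 1 := by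
        push_cast [show h ≤ k - 1 by omega]
        omega
      rw [e]
      ring
    · rw [if_neg hc, show k - 1 - h = k - h by omega, add_zero]
  have hB : Sn n (h + 1) k
      = (∑ j ∈ Finset.Icc (k - 1 - h) (k - 1), Bi n (2 * (j : ℤ) + h + 3))
        + (if h + 2 ≤ k then Bi n (2 * (k : ℤ) - h - 1) else 0) := by
    rw [hSp]
    by_cases hc : h + 2 ≤ k
    · rw [if_pos hc, sum_Icc_bot (show k - 2 - h ≤ k - 1 by omega)]
      rw [show k - 2 - h + 1 = k - 1 - h by omega]
      have e : 2 * ((k - 2 - h : ℕ) : ℤ) + h + 3 = 2 * (k : ℤ) - h - 1 := by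
        push_cast [show h ≤ k - 2 by omega]
        omega
      rw [e]
      ring
    · rw [if_neg hc, show k - 2 - h = k - 1 - h by omega, add_zero]
  have hL : Sn (n + 1) h k
      = (∑ j ∈ Finset.Icc (k - 1 - h) (k - 1), Bi n (2 * (j : ℤ) + h + 1))
        + ∑ j ∈ Finset.Icc (k - 1 - h) (k - 1), Bi n (2 * (j : ℤ) + h + 3) := by
    unfold Sn
    rw [Finset.sum_congr rfl expand, Finset.sum_add_distrib]
  rw [hL, hA]
  have hB' : ∑ j ∈ Finset.Icc (k - 1 - h) (k - 1), Bi n (2 * (j : ℤ) + h + 3)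
      = Sn n (h + 1) k - (if h + 2 ≤ k then Bi n (2 * (k : ℤ) - h - 1) else 0) := by
    rw [hB]; ring
  rw [hB']
  by_cases hc1 : h + 1 ≤ k
  · by_cases hc2 : h + 2 ≤ k
    · rw [if_pos hc1, if_pos hc2, if_neg (by omega)]; ring
    · have hke : k = h + 1 := by omega
      rw [if_pos hc1, if_neg hc2, if_pos hke,
        show 2 * (k : ℤ) - h - 1 = (k : ℤ) by rw [hke]; push_cast; ring]
      ring
  · rw [if_neg hc1, if_neg (by omega), if_neg (by omega)]; ring

/-! ### The master identity -/

lemma master : ∀ (n h k : ℕ), 1 ≤ k → (n + h) % 2 = 0 →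
    (Dn n (h : ℤ) (k : ℤ) : ℤ) = Sn n h k := by
  intro n
  induction n with
  | zero =>
    intro h k hk hpar
    rw [Dn_zero]
    unfold Sn
    rw [show ((0 : ℕ) : ℤ) = 0 from rfl]
    rw [Finset.sum_eq_zero fun j _ => Bi_zero_of_pos _ (by omega)]
  | succ n ih =>
    intro h k hk hpar
    rcases Nat.eq_zero_or_pos h with rfl | hh
    · rw [show ((0 : ℕ) : ℤ) = 0 from rfl,
        show ((n + 1 : ℕ) : ℤ) = (n : ℤ) + 1 by push_cast; ring,
        Dn_succ (n := n) (h := (0 : ℤ)) (k : ℤ) le_rfl,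
        Dn_neg (by norm_num), Sn_succ0 (by positivity) hk]
      have h1 : (Dn n ((0 : ℤ) + 1) ((k : ℕ) : ℤ) : ℤ) = Sn n 1 k := by
        have := ih 1 k hk (by omega)
        rw [show ((1 : ℕ) : ℤ) = (0 : ℤ) + 1 by norm_num] at this
        exact this
      have h2 : (Nn n ((0 : ℤ) + 1) : ℤ) = Bi n 1 := by
        have := Nn_eq_Bi n 1 (by norm_num) (by omega)
        norm_num
        exact this
      rw [Nat.cast_add, Nat.cast_add, Nat.cast_zero, h1,
        apply_ite (fun x : ℕ => (x : ℤ)), Nat.cast_zero]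
      by_cases hk1 : k = 1
      · rw [if_pos (show (0 : ℤ) + 1 = (k : ℤ) by omega), if_pos hk1, h2]
        ring
      · rw [if_neg (show ¬ ((0 : ℤ) + 1 = (k : ℤ)) by omega), if_neg hk1]
        ring
    · rw [show ((n + 1 : ℕ) : ℤ) = (n : ℤ) + 1 by push_cast; ring,
        Dn_succ (n := n) (h := (h : ℤ)) (k : ℤ) (by positivity),
        Sn_succ (by positivity) hh hk]
      have h1 : (Dn n ((h : ℤ) - 1) ((k : ℕ) : ℤ) : ℤ) = Sn n (h - 1) k := by
        have := ih (h - 1) k hk (by omega)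
        rw [show (((h - 1 : ℕ)) : ℤ) = (h : ℤ) - 1 by omega] at this
        exact this
      have h2 : (Dn n ((h : ℤ) + 1) ((k : ℕ) : ℤ) : ℤ) = Sn n (h + 1) k := by
        have := ih (h + 1) k hk (by omega)
        rw [show (((h + 1 : ℕ)) : ℤ) = (h : ℤ) + 1 by omega] at this
        exact this
      rw [Nat.cast_add, Nat.cast_add, h1, h2,
        apply_ite (fun x : ℕ => (x : ℤ)), Nat.cast_zero]
      by_cases hke : (h : ℤ) + 1 = (k : ℤ)
      · have h3 : (Nn n ((h : ℤ) + 1) : ℤ) = Bi n k := by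
          rw [hke]
          exact Nn_eq_Bi n k (by positivity) (by omega)
        rw [if_pos hke, if_pos (show k = h + 1 by omega), h3]
      · rw [if_neg hke, if_neg (show ¬ k = h + 1 by omega)]

/-! ### The term identity -/

lemma term_id (n a : ℤ) (hn : 0 ≤ n) (ha : 0 ≤ a) (hpar : (n - a) % 2 = 0) :
    (n + 1) * Bi n a = (a + 1) * binom (n + 1) ((n - a) / 2) := by
  unfold Bi
  by_cases hna : a ≤ n
  · have hm0 : 0 ≤ (n - a) / 2 := by omega
    have hmn : 2 * ((n - a) / 2) = n - a := by omega
    by_cases hm1 : (n - a) / 2 = 0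
    · have han : a = n := by omega
      rw [hm1, show (0 : ℤ) - 1 = -1 from by ring,
        binom_neg (show (-1 : ℤ) < 0 by norm_num),
        binom_eq (n := n) 0 hn, binom_eq (n := n + 1) 0 (by omega),
        if_pos le_rfl, if_pos le_rfl]
      simp [han]
    · set m := (n - a) / 2 with hmdef
      have hm1' : 1 ≤ m := by omega
      have hmle : m ≤ n := by omega
      rw [binom_eq (n := n) m hn, binom_eq (n := n) (m - 1) hn,
        binom_eq (n := n + 1) m (by omega),
        if_pos (by omega), if_pos (by omega), if_pos (by omega)]
      have e1 : (n + 1).toNat = n.toNat + 1 := by omega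
      have e2 : m.toNat = (m - 1).toNat + 1 := by omega
      rw [e1, e2]
      have key1 := Nat.add_one_mul_choose_eq n.toNat (m - 1).toNat
      have key2 : (n.toNat + 1).choose ((m - 1).toNat + 1)
          = n.toNat.choose (m - 1).toNat + n.toNat.choose ((m - 1).toNat + 1) :=
        Nat.choose_succ_succ _ _
      have key1' : ((n.toNat : ℤ) + 1) * (n.toNat.choose (m - 1).toNat : ℤ)
          = ((n.toNat + 1).choose ((m - 1).toNat + 1) : ℤ) * (((m - 1).toNat : ℤ) + 1) := by
        exact_mod_cast congrArg (Nat.cast : ℕ → ℤ) key1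
      have key2' : (((n.toNat + 1).choose ((m - 1).toNat + 1) : ℕ) : ℤ)
          = (n.toNat.choose (m - 1).toNat : ℤ) + (n.toNat.choose ((m - 1).toNat + 1) : ℤ) := by
        exact_mod_cast congrArg (Nat.cast : ℕ → ℤ) key2
      have c2 : ((n.toNat : ℤ)) = n := by omega
      have c4 : (((m - 1).toNat : ℤ)) = m - 1 := by omega
      rw [c2, c4] at key1'
      have ha1 : a + 1 = n + 1 - 2 * m := by omega
      rw [ha1]
      linear_combination (-(n + 1)) * key2' + (-2) * key1'
  · have hneg : (n - a) / 2 < 0 := by omega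
    rw [binom_neg hneg, binom_neg (show (n - a) / 2 - 1 < 0 by omega),
      binom_neg (n := n + 1) hneg]
    ring

/-- For k > h ≥ 0, (n+1) times the total number of k-down steps over all generalized Dyck
paths from (0,0) to (n,h) equals Σ_{j=k−1−h}^{k−1} (2j+h+3)·C(n+1, (n−2j−h−2)/2). -/
theorem stmt12 (n h k : ℕ) (hhk : h < k) (hmod : n % 2 = h % 2) :
    ((n : ℤ) + 1) * (∑ p ∈ gdPaths n (h : ℤ), downSteps (k : ℤ) p : ℕ) =
      ∑ j ∈ Finset.Icc (k - 1 - h) (k - 1),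
        (2 * (j : ℤ) + h + 3) * binom ((n : ℤ) + 1) (((n : ℤ) - 2 * j - h - 2) / 2) := by
  have hk : 1 ≤ k := by omega
  have hpar : (n + h) % 2 = 0 := by omega
  have hm := master n h k hk hpar
  have hD : (∑ p ∈ gdPaths n (h : ℤ), downSteps (k : ℤ) p) = Dn n (h : ℤ) (k : ℤ) := rfl
  rw [hD, hm]
  unfold Sn
  rw [Finset.mul_sum]
  refine Finset.sum_congr rfl fun j hj => ?_
  rw [show ((n : ℤ) - 2 * (j : ℤ) - (h : ℤ) - 2) = (n : ℤ) - (2 * (j : ℤ) + (h : ℤ) + 2) by ring,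
    show (2 * (j : ℤ) + (h : ℤ) + 3) = (2 * (j : ℤ) + (h : ℤ) + 2) + 1 by ring]
  exact term_id n (2 * (j : ℤ) + h + 2) (by positivity) (by positivity) (by omega)
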